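/- (Taylor expansion of the tilted covariance at λ = 0.) The function λ ↦ Cov_λ(x, x²) vanishes at λ = 0 and is differentiable there with derivative 1/16: Cov_0(x, x²) = 0 and HasDerivAt (fun λ => Cov_λ(x, x²)) (1/16) 0. Equivalently, Cov_λ(x, x²)/λ → 1/16 as λ → 0 through nonzero values. -/

import Mathlib

open intervalIntegral

/-- The exponentially tilted Wigner semicircle weight on `[-1,1]`. -/
noncomputable def tiltW (lam x : ℝ) : ℝ := Real.sqrt (1 - x ^ 2) * Real.exp (lam * x)

/-- The normalization constant `Z(λ)`. -/
noncomputable def tiltZ (lam : ℝ) : ℝ := ∫ x in (-1 : ℝ)..1, tiltW lam x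

/-- The mean `E_λ[f]` under the tilted semicircle measure. -/
noncomputable def tiltE (lam : ℝ) (f : ℝ → ℝ) : ℝ :=
  (tiltZ lam)⁻¹ * ∫ x in (-1 : ℝ)..1, f x * tiltW lam x

/-- The covariance `Cov_λ(f, g)` under the tilted semicircle measure. -/
noncomputable def tiltCov (lam : ℝ) (f g : ℝ → ℝ) : ℝ :=
  tiltE lam (fun x => f x * g x) - tiltE lam f * tiltE lam g

open Real MeasureTheory

-- odd moments vanish
lemma odd_moment (k : ℕ) (hk : Odd k) :
    (∫ x in (-1:ℝ)..1, x ^ k * Real.sqrt (1 - x ^ 2)) = 0 := by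
  have h := intervalIntegral.integral_comp_neg (a := (-1:ℝ)) (b := 1)
    (fun x => x ^ k * Real.sqrt (1 - x ^ 2))
  simp only [neg_neg] at h
  have h2 : (∫ x in (-1:ℝ)..1, (-x) ^ k * Real.sqrt (1 - (-x) ^ 2))
      = ∫ x in (-1:ℝ)..1, -(x ^ k * Real.sqrt (1 - x ^ 2)) := by
    apply intervalIntegral.integral_congr
    intro x _
    simp only [hk.neg_pow, neg_sq, neg_mul]
  rw [h2, intervalIntegral.integral_neg] at h
  linarith

-- substitution
lemma moment_sub (m : ℕ) :
    (∫ x in (-1:ℝ)..1, x ^ m * Real.sqrt (1 - x ^ 2))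
      = ∫ θ in (-(π/2))..(π/2), Real.sin θ ^ m * Real.cos θ ^ 2 := by
  calc (∫ x in (-1:ℝ)..1, x ^ m * Real.sqrt (1 - x ^ 2))
      = ∫ x in Real.sin (-(π/2))..Real.sin (π/2), x ^ m * Real.sqrt (1 - x ^ 2) := by
        rw [Real.sin_neg, Real.sin_pi_div_two]
    _ = ∫ θ in (-(π/2))..(π/2), (Real.sin θ ^ m * Real.sqrt (1 - Real.sin θ ^ 2)) * Real.cos θ :=
        (integral_comp_mul_deriv (fun x _ => Real.hasDerivAt_sin x) Real.continuousOn_cos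
          (by fun_prop)).symm
    _ = ∫ θ in (-(π/2))..(π/2), Real.sin θ ^ m * Real.cos θ ^ 2 := by
        refine integral_congr_ae (MeasureTheory.ae_of_all _ fun θ h => ?_)
        rw [Set.uIoc_of_le (neg_le_self (le_of_lt (half_pos Real.pi_pos))), Set.mem_Ioc] at h
        rw [← Real.cos_eq_sqrt_one_sub_sin_sq (le_of_lt h.1) h.2]
        ring

lemma S2 : (∫ x in (-1:ℝ)..1, x ^ 2 * Real.sqrt (1 - x ^ 2)) = π / 8 := by
  rw [moment_sub 2, integral_sin_sq_mul_cos_sq]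
  have h1 : 4 * (π/2) = 2 * π := by ring
  have h2 : 4 * (-(π/2)) = -(2 * π) := by ring
  rw [h1, h2, Real.sin_neg, Real.sin_two_pi]
  ring

lemma S4 : (∫ x in (-1:ℝ)..1, x ^ 4 * Real.sqrt (1 - x ^ 2)) = π / 16 := by
  rw [moment_sub 4]
  have hc : (∫ θ in (-(π/2))..(π/2), Real.sin θ ^ 4 * Real.cos θ ^ 2)
      = ∫ θ in (-(π/2))..(π/2), (Real.sin θ ^ 4 - Real.sin θ ^ 6) := by
    apply intervalIntegral.integral_congr
    intro θ _
    show Real.sin θ ^ 4 * Real.cos θ ^ 2 = Real.sin θ ^ 4 - Real.sin θ ^ 6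
    rw [show Real.cos θ ^ 2 = 1 - Real.sin θ ^ 2 by linarith [Real.sin_sq_add_cos_sq θ]]
    ring
  have h2 : (∫ θ in (-(π/2))..(π/2), Real.sin θ ^ 2) = π / 2 := by
    rw [integral_sin_sq]; simp
  have h4 : (∫ θ in (-(π/2))..(π/2), Real.sin θ ^ 4) = 3 * π / 8 := by
    rw [show (4:ℕ) = 2 + 2 from rfl, integral_sin_pow, h2]
    simp; ring
  have h6 : (∫ θ in (-(π/2))..(π/2), Real.sin θ ^ 6) = 5 * π / 16 := by
    rw [show (6:ℕ) = 4 + 2 from rfl, integral_sin_pow, h4]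
    simp; ring
  rw [hc, intervalIntegral.integral_sub (by apply Continuous.intervalIntegrable; fun_prop)
    (by apply Continuous.intervalIntegrable; fun_prop), h4, h6]
  ring

lemma tiltW_cont (lam : ℝ) : Continuous (tiltW lam) := by
  unfold tiltW; fun_prop

lemma hW0 : ∀ x : ℝ, tiltW 0 x = Real.sqrt (1 - x ^ 2) := by
  intro x; simp [tiltW]

lemma hasDerivAt_moment (f : ℝ → ℝ) (hf : Continuous f) (hb : ∀ t : ℝ, |t| ≤ 1 → |f t| ≤ 1) :
    HasDerivAt (fun lam => ∫ x in (-1:ℝ)..1, f x * tiltW lam x)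
      (∫ x in (-1:ℝ)..1, (x * f x) * tiltW 0 x) 0 := by
  have hcont : ∀ lam : ℝ, Continuous fun t => f t * tiltW lam t := by
    intro lam; unfold tiltW; fun_prop
  have hcont' : ∀ lam : ℝ, Continuous fun t => (t * f t) * tiltW lam t := by
    intro lam; unfold tiltW; fun_prop
  have key := intervalIntegral.hasDerivAt_integral_of_dominated_loc_of_deriv_le
    (F := fun lam t => f t * tiltW lam t) (F' := fun lam t => (t * f t) * tiltW lam t)
    (x₀ := (0:ℝ)) (a := (-1:ℝ)) (b := 1) (bound := fun _ => Real.exp 1) (μ := volume)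
    (Metric.ball_mem_nhds _ one_pos)
    (Filter.Eventually.of_forall fun lam => (hcont lam).aestronglyMeasurable)
    ((hcont 0).intervalIntegrable _ _)
    (hcont' 0).aestronglyMeasurable
    ?_ (intervalIntegrable_const) ?_
  · exact key.2
  · -- bound
    refine MeasureTheory.ae_of_all _ fun t ht lam hlam => ?_
    rw [Set.uIoc_of_le (by norm_num : (-1:ℝ) ≤ 1), Set.mem_Ioc] at ht
    have ht1 : |t| ≤ 1 := abs_le.mpr ⟨le_of_lt ht.1, ht.2⟩
    have hl1 : |lam| ≤ 1 := by
      have := Metric.mem_ball.mp hlam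
      rw [Real.dist_eq, sub_zero] at this
      exact this.le
    have hft : |f t| ≤ 1 := hb t ht1
    have hs : |Real.sqrt (1 - t ^ 2)| ≤ 1 := by
      rw [abs_of_nonneg (Real.sqrt_nonneg _)]
      exact Real.sqrt_le_one.mpr (by nlinarith [sq_nonneg t])
    have he : |Real.exp (lam * t)| ≤ Real.exp 1 := by
      rw [abs_of_pos (Real.exp_pos _)]
      apply Real.exp_le_exp.mpr
      calc lam * t ≤ |lam * t| := le_abs_self _
        _ = |lam| * |t| := abs_mul _ _
        _ ≤ 1 := by nlinarith [abs_nonneg lam, abs_nonneg t]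
    have habs : ‖(t * f t) * tiltW lam t‖
        = |t| * |f t| * (|Real.sqrt (1 - t ^ 2)| * |Real.exp (lam * t)|) := by
      simp only [tiltW, Real.norm_eq_abs, abs_mul]
    rw [habs]
    calc |t| * |f t| * (|Real.sqrt (1 - t ^ 2)| * |Real.exp (lam * t)|)
        ≤ 1 * 1 * (1 * Real.exp 1) := by
          apply mul_le_mul
          · nlinarith [abs_nonneg t, abs_nonneg (f t)]
          · apply mul_le_mul hs he (abs_nonneg _) one_pos.le
          · positivity
          · norm_num
      _ = Real.exp 1 := by ring
  · -- differentiability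
    refine MeasureTheory.ae_of_all _ fun t _ lam _ => ?_
    have h0 : HasDerivAt (fun l : ℝ => l * t) t lam := hasDerivAt_mul_const t
    have h1 := h0.exp
    have h2 := h1.const_mul (f t * Real.sqrt (1 - t ^ 2))
    have hfe : (fun l : ℝ => f t * tiltW l t)
        = fun l => f t * Real.sqrt (1 - t ^ 2) * Real.exp (l * t) := by
      funext l; simp only [tiltW]; ring
    rw [hfe]
    refine h2.congr_deriv ?_
    simp only [tiltW]; ring

lemma V1 : (∫ x in (-1:ℝ)..1, x * tiltW 0 x) = 0 := by
  have h : (∫ x in (-1:ℝ)..1, x * tiltW 0 x)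
      = ∫ x in (-1:ℝ)..1, x ^ 1 * Real.sqrt (1 - x ^ 2) := by
    apply intervalIntegral.integral_congr; intro x _; simp only [hW0]; ring
  rw [h, odd_moment 1 ⟨0, by norm_num⟩]

lemma V2 : (∫ x in (-1:ℝ)..1, x ^ 2 * tiltW 0 x) = π / 8 := by
  have h : (∫ x in (-1:ℝ)..1, x ^ 2 * tiltW 0 x)
      = ∫ x in (-1:ℝ)..1, x ^ 2 * Real.sqrt (1 - x ^ 2) := by
    apply intervalIntegral.integral_congr; intro x _; simp only [hW0]
  rw [h, S2]

lemma V3 : (∫ x in (-1:ℝ)..1, x * x ^ 2 * tiltW 0 x) = 0 := by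
  have h : (∫ x in (-1:ℝ)..1, x * x ^ 2 * tiltW 0 x)
      = ∫ x in (-1:ℝ)..1, x ^ 3 * Real.sqrt (1 - x ^ 2) := by
    apply intervalIntegral.integral_congr; intro x _; simp only [hW0]; ring
  rw [h, odd_moment 3 ⟨1, by norm_num⟩]

lemma V1' : (∫ x in (-1:ℝ)..1, (x * x) * tiltW 0 x) = π / 8 := by
  have h : (∫ x in (-1:ℝ)..1, (x * x) * tiltW 0 x)
      = ∫ x in (-1:ℝ)..1, x ^ 2 * Real.sqrt (1 - x ^ 2) := by
    apply intervalIntegral.integral_congr; intro x _; simp only [hW0]; ring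
  rw [h, S2]

lemma V3' : (∫ x in (-1:ℝ)..1, (x * (x * x ^ 2)) * tiltW 0 x) = π / 16 := by
  have h : (∫ x in (-1:ℝ)..1, (x * (x * x ^ 2)) * tiltW 0 x)
      = ∫ x in (-1:ℝ)..1, x ^ 4 * Real.sqrt (1 - x ^ 2) := by
    apply intervalIntegral.integral_congr; intro x _; simp only [hW0]; ring
  rw [h, S4]

lemma hZ0 : tiltZ 0 = π / 2 := by
  unfold tiltZ; simp only [hW0]; exact integral_sqrt_one_sub_sq

lemma hDZ : HasDerivAt tiltZ 0 0 := by
  have h := hasDerivAt_moment (fun _ => 1) continuous_const (fun t _ => by norm_num)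
  have hfun : (fun lam => ∫ x in (-1:ℝ)..1, (1:ℝ) * tiltW lam x) = tiltZ := by
    funext lam; unfold tiltZ; apply intervalIntegral.integral_congr; intro x _; ring
  have hval : (∫ x in (-1:ℝ)..1, (x * 1) * tiltW 0 x) = 0 := by
    rw [show (∫ x in (-1:ℝ)..1, (x * 1) * tiltW 0 x) = ∫ x in (-1:ℝ)..1, x * tiltW 0 x from
      intervalIntegral.integral_congr fun x _ => by ring, V1]
  rw [hfun, hval] at h
  exact h

lemma hD1 : HasDerivAt (fun lam => ∫ x in (-1:ℝ)..1, x * tiltW lam x) (π / 8) 0 := by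
  have h := hasDerivAt_moment (fun x => x) continuous_id' (fun t ht => ht)
  rwa [V1'] at h

lemma hD2 : HasDerivAt (fun lam => ∫ x in (-1:ℝ)..1, x ^ 2 * tiltW lam x) 0 0 := by
  have h := hasDerivAt_moment (fun x => x ^ 2) (by fun_prop)
    (fun t ht => by rw [abs_pow]; nlinarith [abs_nonneg t])
  rwa [V3] at h

lemma hD3 : HasDerivAt (fun lam => ∫ x in (-1:ℝ)..1, x * x ^ 2 * tiltW lam x) (π / 16) 0 := by
  have h := hasDerivAt_moment (fun x => x * x ^ 2) (by fun_prop)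
    (fun t ht => by rw [abs_mul, abs_pow]; nlinarith [abs_nonneg t])
  rwa [V3'] at h

/-- Taylor expansion of the tilted covariance at `λ = 0`: it vanishes at `0`
and is differentiable there with derivative `1/16`. -/
theorem tiltCov_taylor_at_zero :
    tiltCov 0 (fun x => x) (fun x => x ^ 2) = 0 ∧
    HasDerivAt (fun lam => tiltCov lam (fun x => x) (fun x => x ^ 2)) (1 / 16) 0 := by
  constructor
  · simp only [tiltCov, tiltE]
    rw [V1, V3]
    ring
  · have hInv : HasDerivAt (fun lam => (tiltZ lam)⁻¹) (-0 / tiltZ 0 ^ 2) 0 :=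
      hDZ.inv (by rw [hZ0]; positivity)
    have hE3 := hInv.mul hD3
    have hE1 := hInv.mul hD1
    have hE2 := hInv.mul hD2
    have hfinal := hE3.sub (hE1.mul hE2)
    simp only [tiltCov, tiltE]
    refine hfinal.congr_deriv ?_
    rw [hZ0, V1, V2, V3]
    simp only [Pi.mul_apply]
    rw [hZ0, V2]
    have hpi := Real.pi_ne_zero
    field_simp
    ring
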